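/- arXiv:2501.03042 — 2 statements merged into one kernel-verified Lean document; each statement's English description precedes it below -/
import Mathlib

section
/- Let C and D be rigid monoidal categories with pivotal structures j and j' respectively, and let Φ : C → D be a faithful monoidal functor that preserves the pivotal structure. If j' is spherical, then j is also spherical. -/
/-!
# Statement 1

Let `C` and `D` be rigid monoidal categories with pivotal structures `j` and `j'`
respectively, and let `Φ : C → D` be a faithful monoidal functor that preserves the
pivotal structure.  If `j'` is spherical, then `j` is also spherical.

Conventions: a pivotal structure is a (monoidal) natural isomorphism `Id ≅ (−)**`,
and it is *spherical* if `tr (j_X) = tr (j_{X*})` for all `X`, where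
`tr f := ev_{X*} ∘ (f ⊗ id_{X*}) ∘ coev_X`.  For a monoidal functor `Φ`, the
*duality transformation* `χ_X : Φ(X*) ≅ Φ(X)*` is the canonical comparison
morphism `χ_X = (Φ(ev_X) ⊗ id) ∘ (id ⊗ coev_{Φ(X)})` (which is invertible);
`ξ_X := (χ_X{}^*)^{-1} ∘ χ_{X*} : Φ(X**) ≅ Φ(X)**`, and `Φ` *preserves the pivotal
structure* if `ξ_X ∘ Φ(j_X) = j'_{Φ(X)}` for every `X`.  Mathlib's right duals `Xᘁ`
play the role of the paper's left duals `X^*`.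
-/

open CategoryTheory MonoidalCategory Functor.LaxMonoidal Functor.OplaxMonoidal

namespace FSIndicator

variable {C : Type*} [Category C] [MonoidalCategory C] [RightRigidCategory C]

/-- The double (right-)dual functor `X ↦ X**` of a (right) rigid monoidal category. -/
noncomputable def doubleDualFunctor (C : Type*) [Category C] [MonoidalCategory C]
    [RightRigidCategory C] : C ⥤ C where
  obj X := (Xᘁ)ᘁ
  map f := rightAdjointMate (rightAdjointMate f)
  map_id _ := by simp
  map_comp f g := by simp [comp_rightAdjointMate]

/-- The (left) categorical trace of a morphism `f : X ⟶ X**`. -/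
noncomputable def catTrace {X : C} (f : X ⟶ (Xᘁ)ᘁ) : CategoryTheory.End (𝟙_ C) :=
  η_ X Xᘁ ≫ (f ▷ Xᘁ) ≫ ε_ Xᘁ ((Xᘁ)ᘁ)

/-- A pivotal structure on a rigid monoidal category `C`: a (monoidal) natural
isomorphism `Id_C ≅ (−)**`. -/
noncomputable abbrev Pivotal (C : Type*) [Category C] [MonoidalCategory C]
    [RightRigidCategory C] :=
  𝟭 C ≅ doubleDualFunctor C

/-- A pivotal structure `j` is *spherical* if `tr (j_X) = tr (j_{X*})` for all `X`. -/
noncomputable def IsSpherical (j : Pivotal C) : Prop :=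
  ∀ X : C, catTrace (j.hom.app X) = catTrace (j.hom.app (Xᘁ))

variable {D : Type*} [Category D] [MonoidalCategory D] [RightRigidCategory D]

/-- The duality transformation `χ_X : Φ(X*) ⟶ Φ(X)*` of a monoidal functor `Φ`,
`χ_X = (Φ(ev_X) ⊗ id_{Φ(X)*}) ∘ (id_{Φ(X*)} ⊗ coev_{Φ(X)})` (monoidal structure maps
inserted). -/
noncomputable def dualityTransform (F : C ⥤ D) [F.Monoidal] (X : C) :
    F.obj (Xᘁ) ⟶ (F.obj X)ᘁ :=
  (ρ_ (F.obj (Xᘁ))).inv ≫ (F.obj (Xᘁ) ◁ η_ (F.obj X) ((F.obj X)ᘁ)) ≫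
    (α_ _ _ _).inv ≫ ((μ F (Xᘁ) X ≫ F.map (ε_ X (Xᘁ)) ≫ η F) ▷ ((F.obj X)ᘁ)) ≫
      (λ_ ((F.obj X)ᘁ)).hom

/-- The canonical comparison `ξ_X : Φ(X**) ⟶ Φ(X)**`, defined as
`ξ_X = ((χ_X)^*)⁻¹ ∘ χ_{X*}`; here we use that `(χ_X⁻¹)^* = ((χ_X)^*)⁻¹`. -/
noncomputable def xiTransform (F : C ⥤ D) [F.Monoidal]
    [∀ X : C, IsIso (dualityTransform F X)] (X : C) :
    F.obj ((Xᘁ)ᘁ) ⟶ ((F.obj X)ᘁ)ᘁ :=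
  dualityTransform F (Xᘁ) ≫ rightAdjointMate (inv (dualityTransform F X))

/-- A monoidal functor `Φ` between pivotal rigid monoidal categories *preserves the
pivotal structure* if `ξ_X ∘ Φ(j_X) = j'_{Φ(X)}` for every object `X`. -/
noncomputable def PreservesPivotal (F : C ⥤ D) [F.Monoidal]
    [∀ X : C, IsIso (dualityTransform F X)] (j : Pivotal C) (j' : Pivotal D) : Prop :=
  ∀ X : C, F.map (j.hom.app X) ≫ xiTransform F X = j'.hom.app (F.obj X)


section Aux

/-- The categorical trace is invariant under conjugation by an isomorphism (replacing
`h : A ⟶ A**` by `g⁻¹ ≫ h ≫ g** : B ⟶ B**` along an iso `g : A ≅ B`). -/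
theorem catTrace_conj {A B : C} (g : A ⟶ B) [IsIso g] (h : A ⟶ (Aᘁ)ᘁ) :
    catTrace (inv g ≫ h ≫ ((gᘁ)ᘁ)) = catTrace h := by
  dsimp [catTrace]
  simp only [comp_whiskerRight, Category.assoc]
  rw [rightAdjointMate_comp_evaluation (gᘁ)]
  slice_lhs 3 4 => rw [← whisker_exchange]
  slice_lhs 2 3 => rw [← whisker_exchange]
  slice_lhs 1 2 => rw [coevaluation_comp_rightAdjointMate g]
  simp

variable {D : Type*} [Category D] [MonoidalCategory D] [RightRigidCategory D]

theorem dualityTransform_eq (F : C ⥤ D) [F.Monoidal] (X : C) :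
    dualityTransform F X =
      (tensorRightHomEquiv (F.obj (Xᘁ)) (F.obj X) ((F.obj X)ᘁ) (𝟙_ D))
        (μ F (Xᘁ) X ≫ F.map (ε_ X (Xᘁ)) ≫ η F) ≫ (λ_ _).hom := by
  simp [dualityTransform, tensorRightHomEquiv]

/-- `χ` is compatible with the evaluations. -/
theorem chi_eval (F : C ⥤ D) [F.Monoidal] (X : C) :
    (dualityTransform F X ▷ F.obj X) ≫ ε_ (F.obj X) ((F.obj X)ᘁ) =
      μ F (Xᘁ) X ≫ F.map (ε_ X (Xᘁ)) ≫ η F := by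
  conv_rhs => rw [← (tensorRightHomEquiv (F.obj (Xᘁ)) (F.obj X) ((F.obj X)ᘁ) (𝟙_ D)).left_inv
      (μ F (Xᘁ) X ≫ F.map (ε_ X (Xᘁ)) ≫ η F)]
  rw [dualityTransform_eq]
  dsimp [tensorRightHomEquiv]
  have tail : ((λ_ ((F.obj X)ᘁ)).hom ▷ F.obj X) ≫ ε_ (F.obj X) ((F.obj X)ᘁ) =
      (α_ (𝟙_ D) ((F.obj X)ᘁ) (F.obj X)).hom ≫ (𝟙_ D ◁ ε_ (F.obj X) ((F.obj X)ᘁ)) ≫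
        (ρ_ (𝟙_ D)).hom := by
    simp [← unitors_equal]
  simp only [comp_whiskerRight, Category.assoc, tail]

/-- `χ` is compatible with the coevaluations. -/
theorem chi_coev (F : C ⥤ D) [F.Monoidal] (X : C) :
    ε F ≫ F.map (η_ X (Xᘁ)) ≫ δ F X (Xᘁ) ≫ (F.obj X ◁ dualityTransform F X) =
      η_ (F.obj X) ((F.obj X)ᘁ) := by
  apply (tensorRightHomEquiv (𝟙_ D) (F.obj X) ((F.obj X)ᘁ) (F.obj X)).symm.injective
  dsimp [tensorRightHomEquiv]
  simp only [comp_whiskerRight, Category.assoc]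
  slice_lhs 4 5 => rw [associator_naturality_middle]
  slice_lhs 5 6 => rw [← MonoidalCategory.whiskerLeft_comp]; rw [chi_eval]
  have assoc' : δ F X (Xᘁ) ▷ F.obj X ≫ (α_ (F.obj X) (F.obj (Xᘁ)) (F.obj X)).hom ≫
      F.obj X ◁ μ F (Xᘁ) X =
      μ F (X ⊗ Xᘁ) X ≫ F.map (α_ X (Xᘁ) X).hom ≫ δ F X ((Xᘁ) ⊗ X) := by
    rw [← cancel_epi (μ F X (Xᘁ) ▷ F.obj X)]
    have := Functor.LaxMonoidal.associativity (F := F) X (Xᘁ) X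
    rw [← cancel_mono (μ F X ((Xᘁ) ⊗ X))]
    simp only [Category.assoc, Functor.Monoidal.μ_δ, Functor.Monoidal.δ_μ,
      Functor.Monoidal.μ_δ_assoc, Functor.Monoidal.δ_μ_assoc, Category.comp_id]
    rw [← this]
    simp [Functor.Monoidal.μ_δ_assoc]
  simp only [MonoidalCategory.whiskerLeft_comp]
  slice_lhs 3 5 => rw [assoc']
  slice_lhs 2 3 => rw [μ_natural_left]
  slice_lhs 5 6 => rw [δ_natural_right]
  simp only [Category.assoc]
  slice_lhs 3 5 => rw [← F.map_comp, ← F.map_comp, ExactPairing.evaluation_coevaluation]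
  slice_lhs 4 6 => rw [right_unitality_hom]
  slice_lhs 3 4 => rw [← F.map_comp]
  simp only [Category.assoc, Iso.inv_hom_id, Category.comp_id, Iso.inv_hom_id_assoc]
  rw [ExactPairing.evaluation_coevaluation_assoc, Iso.inv_hom_id, Category.comp_id,
    ← Functor.LaxMonoidal.left_unitality]

/-- The categorical trace of `F.map f ≫ ξ_X` is the image of the trace of `f`,
transported along the unit comparison isomorphism. -/
theorem catTrace_map (F : C ⥤ D) [F.Monoidal] [∀ X : C, IsIso (dualityTransform F X)]
    {X : C} (f : X ⟶ (Xᘁ)ᘁ) :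
    catTrace (F.map f ≫ xiTransform F X) = ε F ≫ F.map (catTrace f) ≫ η F := by
  dsimp [catTrace, xiTransform]
  simp only [comp_whiskerRight, Category.assoc]
  rw [rightAdjointMate_comp_evaluation (inv (dualityTransform F X))]
  slice_lhs 3 4 => rw [← whisker_exchange]
  slice_lhs 2 3 => rw [← whisker_exchange]
  have h1 : η_ (F.obj X) ((F.obj X)ᘁ) ≫ (F.obj X ◁ inv (dualityTransform F X)) =
      ε F ≫ F.map (η_ X (Xᘁ)) ≫ δ F X (Xᘁ) := by
    rw [← chi_coev F X]
    simp only [Category.assoc, ← MonoidalCategory.whiskerLeft_comp, IsIso.hom_inv_id,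
      MonoidalCategory.whiskerLeft_id, Category.comp_id]
  slice_lhs 1 2 => rw [h1]
  slice_lhs 5 6 => rw [chi_eval]
  slice_lhs 4 5 => rw [μ_natural_left]
  simp only [Category.assoc, Functor.Monoidal.δ_μ_assoc]
  simp only [← F.map_comp, ← F.map_comp_assoc]

end Aux

/-- **(Proposition 2.6.)**  Let `C` and `D` be rigid monoidal categories with pivotal
structures `j` and `j'`, and suppose the faithful monoidal functor `Φ : C ⥤ D`
preserves the pivotal structure.  If `j'` is spherical then so is `j`. -/
theorem isSpherical_of_faithful_preservesPivotal
    (F : C ⥤ D) [F.Monoidal] [F.Faithful] [∀ X : C, IsIso (dualityTransform F X)]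
    (j : Pivotal C) (j' : Pivotal D)
    (hpres : PreservesPivotal F j j') (hsph : IsSpherical j') : IsSpherical j := by
  intro X
  have t1 : catTrace (j'.hom.app (F.obj X)) =
      ε F ≫ F.map (catTrace (j.hom.app X)) ≫ η F := by
    rw [← hpres X]; exact catTrace_map F (j.hom.app X)
  have t2 : catTrace (j'.hom.app (F.obj (Xᘁ))) =
      ε F ≫ F.map (catTrace (j.hom.app (Xᘁ))) ≫ η F := by
    rw [← hpres (Xᘁ)]; exact catTrace_map F (j.hom.app (Xᘁ))
  have hnat : dualityTransform F X ≫ j'.hom.app ((F.obj X)ᘁ) =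
      j'.hom.app (F.obj (Xᘁ)) ≫ ((dualityTransform F X)ᘁ)ᘁ :=
    j'.hom.naturality (dualityTransform F X)
  have t4 : catTrace (j'.hom.app ((F.obj X)ᘁ)) = catTrace (j'.hom.app (F.obj (Xᘁ))) := by
    rw [← catTrace_conj (dualityTransform F X) (j'.hom.app (F.obj (Xᘁ)))]
    congr 1
    exact (IsIso.eq_inv_comp _).mpr hnat
  have key : ε F ≫ F.map (catTrace (j.hom.app X)) ≫ η F =
      ε F ≫ F.map (catTrace (j.hom.app (Xᘁ))) ≫ η F := by
    rw [← t1, ← t2, ← t4]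
    exact hsph (F.obj X)
  apply F.map_injective
  rw [← cancel_epi (ε F), ← cancel_mono (η F)]
  simpa using key

end FSIndicator
end

section
/- Let (F, G, ▷, ◁) be a matched pair of finite groups, and let ℂ^G # ℂF be the associated bismash product Hopf algebra. For a ∈ F, let ℂ^G # p_a denote the left ℂ^G#ℂF-module with underlying space ℂ^G ⊗ ℂp_a induced from the 1-dimensional ℂ^F-representation ℂp_a. Then for every n ≥ 1, ν_n(ℂ^G # p_a) = |{x ∈ G : (a, x)^n = (1, 1) in F ⋈ G}|. -/
/-!
# Statement 17

Let `(F, G, ▷, ◁)` be a matched pair of finite groups and let `ℂ^G # ℂF` be the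
associated bismash product Hopf algebra.  For `a ∈ F`, let `ℂ^G # p_a` denote the
left `ℂ^G#ℂF`-module with underlying space `ℂ^G ⊗ ℂp_a` induced from the
1-dimensional `ℂ^F`-representation `ℂp_a`.  Then for every `n ≥ 1`,
`ν_n(ℂ^G # p_a) = |{ x ∈ G : (a, x)^n = (1, 1) in F ⋈ G }|`.

**Formalization.**  The bismash product Hopf algebra (which arises as the left
partially dualized Hopf algebra of `ℂ^{F ⋈ G}` with respect to the left coideal
subalgebra `B = ℂ^F`, Lemma 5.6 of the paper) is presented as an abstract Hopf
algebra `K` over `ℂ` with a basis `bas (y, s)` (`y ∈ G`, `s ∈ F`), whose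
multiplication, comultiplication and counit are given by the matched-pair structure
constants
`bas (y,s) · bas (z,t) = δ_{s, z ▷ t} · bas (yz, t)`,
`Δ (bas (y,s)) = Σ_{b b' = s} bas (y, b) ⊗ bas (y ◁ b, b')`,
`ε (bas (y,s)) = δ_{s,1}`.
The module `ℂ^G # p_a` is presented as the representation `ρ` of `K` on `G → ℂ`
determined by `bas (y,s) · e_z = δ_{s, z ▷ a} · e_{yz}` on the standard basis
(this is the module `C^* # L` for the 1-dimensional `ℂ^F`-representation
`L = ℂ p_a`).  The indicator is `ν_n(V) = χ_V(Λ^{[n]})` where `Λ` is the normalized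
integral of `K`, and `(a, x)^n` is computed in the bicrossed product group `F ⋈ G`
with multiplication `(a,x)(b,y) = (a (x ▷ b), (x ◁ b) y)`.
-/

open scoped TensorProduct

namespace FSIndicator

/-- The `n`-th Sweedler power map `a ↦ a^{[n]} = Σ a_{(1)} a_{(2)} ⋯ a_{(n)}` of a
bialgebra (`a^{[0]} = ε(a)1`). -/
noncomputable def sweedlerPower (R A : Type*) [CommSemiring R] [Semiring A]
    [Bialgebra R A] : ℕ → A →ₗ[R] A
  | 0 => Algebra.linearMap R A ∘ₗ Coalgebra.counit
  | n + 1 => LinearMap.mul' R A ∘ₗ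
      TensorProduct.map LinearMap.id (sweedlerPower R A n) ∘ₗ Coalgebra.comul

/-- `Λ` is a normalized (left) integral: `h Λ = ε(h) Λ` for all `h`, and `ε(Λ) = 1`. -/
def IsNormalizedIntegral (R : Type*) {H : Type*} [CommSemiring R] [Semiring H]
    [Bialgebra R H] (Λ : H) : Prop :=
  (∀ h : H, h * Λ = Coalgebra.counit (R := R) h • Λ) ∧
    Coalgebra.counit (R := R) Λ = (1 : R)

/-- The `n`-th Frobenius–Schur indicator `ν_n(V) = χ_V(Λ^{[n]})` of a representation
`ρ` of a semisimple Hopf algebra over `ℂ` with normalized integral `Λ`. -/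
noncomputable def nuRep {H : Type*} [Semiring H] [Bialgebra ℂ H] (Λ : H)
    {V : Type*} [AddCommGroup V] [Module ℂ V]
    (ρ : H →ₐ[ℂ] Module.End ℂ V) (n : ℕ) : ℂ :=
  LinearMap.trace ℂ V (ρ (sweedlerPower ℂ H n Λ))

/-- A matched pair of groups `(F, G, ▷, ◁)`: a left action `▷` of `G` on (the set)
`F` and a right action `◁` of `F` on (the set) `G` satisfying the matched-pair
compatibility conditions. -/
structure MatchedPair (F G : Type*) [Group F] [Group G] where
  /-- the action `x ▷ b` -/
  tr : G → F → F
  /-- the action `x ◁ b` -/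
  tl : G → F → G
  one_tr : ∀ b, tr 1 b = b
  mul_tr : ∀ x y b, tr (x * y) b = tr x (tr y b)
  tl_one : ∀ x, tl x 1 = x
  tl_mul : ∀ x b c, tl x (b * c) = tl (tl x b) c
  tr_one : ∀ x, tr x 1 = 1
  one_tl : ∀ b, tl 1 b = 1
  tr_mul_compat : ∀ x b c, tr x (b * c) = tr x b * tr (tl x b) c
  mul_tl_compat : ∀ x y b, tl (x * y) b = tl x (tr y b) * tl y b

/-- The multiplication of the bicrossed product group `F ⋈ G`:
`(a, x) (b, y) = (a (x ▷ b), (x ◁ b) y)`. -/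
def MatchedPair.bowtieMul {F G : Type*} [Group F] [Group G] (mp : MatchedPair F G)
    (p q : F × G) : F × G :=
  (p.1 * mp.tr p.2 q.1, mp.tl p.2 q.1 * q.2)

/-- Powers in the bicrossed product group `F ⋈ G`. -/
def MatchedPair.bowtiePow {F G : Type*} [Group F] [Group G] (mp : MatchedPair F G)
    (p : F × G) : ℕ → F × G
  | 0 => (1, 1)
  | n + 1 => mp.bowtieMul p (mp.bowtiePow p n)

section Grp
variable {F G : Type*} [Group F] [Group G]

/-- The bicrossed product group `F ⋈ G` as a structure. -/
@[ext]
structure MPG (mp : MatchedPair F G) where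
  f : F
  g : G

namespace MPG

variable {mp : MatchedPair F G}

instance : Group (MPG mp) where
  mul p q := ⟨p.f * mp.tr p.g q.f, mp.tl p.g q.f * q.g⟩
  one := ⟨1, 1⟩
  inv p := ⟨mp.tr p.g⁻¹ p.f⁻¹, mp.tl p.g⁻¹ p.f⁻¹⟩
  mul_assoc := by
    rintro ⟨a, x⟩ ⟨b, y⟩ ⟨c, z⟩
    ext
    · show a * mp.tr x b * mp.tr (mp.tl x b * y) c = a * mp.tr x (b * mp.tr y c)
      rw [mp.tr_mul_compat, mp.mul_tr, mul_assoc]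
    · show mp.tl (mp.tl x b * y) c * z = mp.tl x (b * mp.tr y c) * (mp.tl y c * z)
      rw [mp.mul_tl_compat, mp.tl_mul, mul_assoc]
  one_mul := by
    rintro ⟨b, x⟩; ext
    · show 1 * mp.tr 1 b = b; rw [mp.one_tr, one_mul]
    · show mp.tl 1 b * x = x; rw [mp.one_tl, one_mul]
  mul_one := by
    rintro ⟨b, x⟩; ext
    · show b * mp.tr x 1 = b; rw [mp.tr_one, mul_one]
    · show mp.tl x 1 * 1 = x; rw [mp.tl_one, mul_one]
  inv_mul_cancel := by
    rintro ⟨b, x⟩; ext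
    · show mp.tr x⁻¹ b⁻¹ * mp.tr (mp.tl x⁻¹ b⁻¹) b = 1
      rw [← mp.tr_mul_compat, inv_mul_cancel, mp.tr_one]
    · show mp.tl (mp.tl x⁻¹ b⁻¹) b * x = 1
      rw [← mp.tl_mul, inv_mul_cancel, mp.tl_one, inv_mul_cancel]

@[simp] lemma mul_f (p q : MPG mp) : (p * q).f = p.f * mp.tr p.g q.f := rfl
@[simp] lemma mul_g (p q : MPG mp) : (p * q).g = mp.tl p.g q.f * q.g := rfl
@[simp] lemma one_f : (1 : MPG mp).f = 1 := rfl
@[simp] lemma one_g : (1 : MPG mp).g = 1 := rfl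

/-- inclusion of `F`. -/
def mkF (mp : MatchedPair F G) : F →* MPG mp where
  toFun b := ⟨b, 1⟩
  map_one' := rfl
  map_mul' b c := by ext <;> simp [mp.one_tr, mp.one_tl]

/-- inclusion of `G`. -/
def mkG (mp : MatchedPair F G) : G →* MPG mp where
  toFun x := ⟨1, x⟩
  map_one' := rfl
  map_mul' x z := by ext <;> simp [mp.tr_one, mp.tl_one]

@[simp] lemma mkF_f (b : F) : (mkF mp b).f = b := rfl
@[simp] lemma mkF_g (b : F) : (mkF mp b).g = 1 := rfl
@[simp] lemma mkG_f (x : G) : (mkG mp x).f = 1 := rfl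
@[simp] lemma mkG_g (x : G) : (mkG mp x).g = x := rfl

lemma mkF_mul_mkG (b : F) (x : G) : mkF mp b * mkG mp x = ⟨b, x⟩ := by
  ext <;> simp [mp.tr_one, mp.tl_one, mp.one_tr, mp.one_tl]

lemma exchange (x : G) (b : F) :
    mkG mp x * mkF mp b = mkF mp (mp.tr x b) * mkG mp (mp.tl x b) := by
  rw [mkF_mul_mkG]; ext <;> simp

lemma mkF_mul_mkG_inj {b c : F} {x z : G}
    (h : mkF mp b * mkG mp x = mkF mp c * mkG mp z) : b = c ∧ x = z := by
  rw [mkF_mul_mkG, mkF_mul_mkG] at h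
  exact ⟨congrArg MPG.f h, congrArg MPG.g h⟩

lemma bowtiePow_pair (a : F) (x : G) (n : ℕ) :
    mp.bowtiePow (a, x) n = (((mkF mp a * mkG mp x) ^ n).f, ((mkF mp a * mkG mp x) ^ n).g) := by
  induction n with
  | zero => simp [MatchedPair.bowtiePow]
  | succ n ih =>
      rw [pow_succ']
      show mp.bowtieMul (a, x) (mp.bowtiePow (a, x) n) = _
      rw [ih, mkF_mul_mkG]
      rfl

lemma bowtiePow_eq_one_iff (a : F) (x : G) (n : ℕ) :
    mp.bowtiePow (a, x) n = (1, 1) ↔ (mkF mp a * mkG mp x) ^ n = 1 := by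
  rw [bowtiePow_pair, Prod.mk.injEq]
  constructor
  · rintro ⟨h1, h2⟩; ext <;> simpa
  · intro h; rw [h]; simp

instance [DecidableEq F] [DecidableEq G] : DecidableEq (MPG mp) := fun p q =>
  decidable_of_iff (p.f = q.f ∧ p.g = q.g)
    ⟨fun h => MPG.ext h.1 h.2, fun h => by rw [h]; exact ⟨rfl, rfl⟩⟩

lemma conj_pow_eq_one_iff {M : Type*} [Group M] (g h : M) (n : ℕ) :
    (g * h * g⁻¹) ^ n = 1 ↔ h ^ n = 1 := by
  rw [← MulAut.conj_apply, ← map_pow]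
  exact map_eq_one_iff _ (MulAut.conj g).injective

end MPG
end Grp
section Seq
variable {F G : Type*} [Group F] [Group G]

variable (mp : MatchedPair F G)

/-- `F`-component sequence of powers of `(u⁻¹, y)`. -/
def Sseq (y : G) (u : F) : ℕ → F
  | 0 => 1
  | k + 1 => u⁻¹ * mp.tr y (Sseq y u k)

/-- `G`-component sequence of powers of `(u⁻¹, y)`. -/
def Xseq (y : G) (u : F) : ℕ → G
  | 0 => 1
  | k + 1 => mp.tl y (Sseq mp y u k) * Xseq y u k

/-- the `w`-index sequence of the coefficient orbit. -/
def Wseq (y : G) (u : F) : ℕ → G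
  | 0 => 1
  | k + 1 => Wseq y u k * (mp.tl y (Sseq mp y u (k + 1)))⁻¹

/-- the `u`-index sequence of the coefficient orbit. -/
def Useq (y : G) (u : F) (k : ℕ) : F :=
  (mp.tr y (Sseq mp y u k))⁻¹ * u * Sseq mp y u k

variable {mp}

lemma Useq_zero (y : G) (u : F) : Useq mp y u 0 = u := by
  simp [Useq, Sseq, mp.tr_one]

lemma Sseq_succ' (y : G) (u : F) (k : ℕ) :
    Sseq mp y u (k + 1) = Sseq mp y u k * (Useq mp y u k)⁻¹ := by
  simp [Sseq, Useq, mul_assoc]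

lemma Sseq_succ_mul_Useq (y : G) (u : F) (k : ℕ) :
    Sseq mp y u (k + 1) * Useq mp y u k = Sseq mp y u k := by
  rw [Sseq_succ', inv_mul_cancel_right]

lemma Sseq_succ_inv_mul (y : G) (u : F) (k : ℕ) :
    (Sseq mp y u (k + 1))⁻¹ * Sseq mp y u k = Useq mp y u k := by
  rw [← Sseq_succ_mul_Useq y u k, inv_mul_cancel_left]

open MPG in
lemma exchange_Useq (y : G) (u : F) (k : ℕ) :
    mp.tr (mp.tl y (Sseq mp y u (k + 1))) (Useq mp y u k) = Useq mp y u (k + 1) ∧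
      mp.tl (mp.tl y (Sseq mp y u (k + 1))) (Useq mp y u k) = mp.tl y (Sseq mp y u k) := by
  have h1 : mkF mp (mp.tr y (Sseq mp y u (k + 1))) * (mkG mp (mp.tl y (Sseq mp y u (k + 1))) * mkF mp (Useq mp y u k)) =
      mkF mp (mp.tr y (Sseq mp y u (k + 1))) *
        (mkF mp (mp.tr (mp.tl y (Sseq mp y u (k + 1))) (Useq mp y u k)) *
          mkG mp (mp.tl (mp.tl y (Sseq mp y u (k + 1))) (Useq mp y u k))) := by
    rw [exchange]
  rw [← mul_assoc, ← exchange, mul_assoc, ← map_mul, Sseq_succ_mul_Useq, exchange,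
    ← mul_assoc, ← map_mul] at h1
  have h2 := mkF_mul_mkG_inj h1.symm
  have hmul : u * Sseq mp y u (k + 1) = mp.tr y (Sseq mp y u k) := by
    rw [Sseq]; simp
  have hU : Useq mp y u (k + 1) =
      (mp.tr y (Sseq mp y u (k + 1)))⁻¹ * mp.tr y (Sseq mp y u k) := by
    rw [Useq, mul_assoc, hmul]
  constructor
  · rw [hU, ← h2.1, inv_mul_cancel_left]
  · exact h2.2

open MPG in
lemma pow_formula (y : G) (u : F) (k : ℕ) :
    (mkF mp u⁻¹ * mkG mp y) ^ k = mkF mp (Sseq mp y u k) * mkG mp (Xseq mp y u k) := by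
  induction k with
  | zero => simp [Sseq, Xseq]
  | succ k ih =>
      rw [pow_succ', ih, show Sseq mp y u (k+1) = u⁻¹ * mp.tr y (Sseq mp y u k) from rfl,
        show Xseq mp y u (k+1) = mp.tl y (Sseq mp y u k) * Xseq mp y u k from rfl,
        map_mul, map_mul]
      calc mkF mp u⁻¹ * mkG mp y * (mkF mp (Sseq mp y u k) * mkG mp (Xseq mp y u k))
          = mkF mp u⁻¹ * (mkG mp y * mkF mp (Sseq mp y u k)) * mkG mp (Xseq mp y u k) := by
            rw [mul_assoc, mul_assoc, mul_assoc]
        _ = _ := by rw [exchange]; simp only [mul_assoc]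

lemma Wseq_eq (y : G) (u : F) (k : ℕ) :
    Wseq mp y u k = y * (Xseq mp y u (k + 1))⁻¹ := by
  induction k with
  | zero => simp [Wseq, Xseq, Sseq, mp.tl_one]
  | succ k ih =>
      rw [Wseq, ih, show Xseq mp y u (k+1+1) = mp.tl y (Sseq mp y u (k+1)) * Xseq mp y u (k+1)
        from rfl]
      simp [mul_assoc]

open MPG in
lemma final_iff (y : G) (u : F) (n : ℕ) :
    (Sseq mp y u n = 1 ∧ Wseq mp y u n = 1) ↔ (mkF mp u⁻¹ * mkG mp y) ^ n = 1 := by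
  rw [pow_formula]
  constructor
  · rintro ⟨h1, h2⟩
    rw [Wseq_eq, mul_inv_eq_one, show Xseq mp y u (n+1) = mp.tl y (Sseq mp y u n) *
      Xseq mp y u n from rfl, h1, mp.tl_one] at h2
    have : Xseq mp y u n = 1 := by
      have := congrArg (fun t => y⁻¹ * t) h2
      simpa using this.symm
    rw [h1, this]; simp
  · intro h
    have h' : mkF mp (Sseq mp y u n) * mkG mp (Xseq mp y u n) = mkF mp 1 * mkG mp 1 := by
      simpa using h
    obtain ⟨h1, h2⟩ := mkF_mul_mkG_inj h'
    refine ⟨h1, ?_⟩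
    rw [Wseq_eq, show Xseq mp y u (n+1) = mp.tl y (Sseq mp y u n) * Xseq mp y u n from rfl,
      h1, h2, mp.tl_one]
    simp

end Seq
section Hopf
variable {F G : Type*} [Group F] [Group G]
  [Fintype F] [Fintype G] [DecidableEq F] [DecidableEq G]
  {mp : MatchedPair F G}
  {K : Type*} [Ring K] [HopfAlgebra ℂ K]

lemma tr_injective (mp : MatchedPair F G) (y : G) : Function.Injective (mp.tr y) := by
  intro s s' h
  have := congrArg (mp.tr y⁻¹) h
  rwa [← mp.mul_tr, ← mp.mul_tr, inv_mul_cancel, mp.one_tr, mp.one_tr] at this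

lemma tr_eq_one_iff (mp : MatchedPair F G) (y : G) (s : F) : mp.tr y s = 1 ↔ s = 1 := by
  constructor
  · intro h; exact tr_injective mp y (h.trans (mp.tr_one y).symm)
  · rintro rfl; exact mp.tr_one y

section withbas
variable (bas : Module.Basis (G × F) ℂ K)
  (hmul : ∀ (y z : G) (s t : F),
      bas (y, s) * bas (z, t) = if s = mp.tr z t then bas (y * z, t) else 0)

include hmul

lemma repr_basis_apply (p q : G × F) : bas.repr (bas p) q = if p = q then 1 else 0 := by
  rw [Module.Basis.repr_self, Finsupp.single_apply]

lemma one_eq_sum : (1 : K) = ∑ t : F, bas (1, t) := by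
  have h : LinearMap.mulLeft ℂ (∑ t : F, bas ((1 : G), t)) = LinearMap.id := by
    apply Module.Basis.ext bas
    rintro ⟨z, s⟩
    simp only [LinearMap.mulLeft_apply, LinearMap.id_apply, Finset.sum_mul, hmul]
    rw [Finset.sum_ite_eq' Finset.univ (mp.tr z s) (fun _ => bas (1 * z, s))]
    simp
  have h2 := congrArg (fun (L : K →ₗ[ℂ] K) => L 1) h
  simpa using h2.symm

lemma repr_mul_basis (z : G) (t : F) (w : G) (u : F) (v : K) :
    bas.repr (v * bas (z, t)) (w, u) =
      if u = t then bas.repr v (w * z⁻¹, mp.tr z t) else 0 := by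
  by_cases hu : u = t
  · subst hu
    rw [if_pos rfl]
    have h : (Finsupp.lapply ((w, u) : G × F)).comp
        (bas.repr.toLinearMap.comp (LinearMap.mulRight ℂ (bas (z, u)))) =
        (Finsupp.lapply ((w * z⁻¹, mp.tr z u) : G × F)).comp bas.repr.toLinearMap := by
      apply Module.Basis.ext bas
      rintro ⟨y', s'⟩
      simp only [LinearMap.comp_apply, LinearMap.mulRight_apply, hmul,
        LinearEquiv.coe_toLinearMap, Finsupp.lapply_apply]
      by_cases h1 : s' = mp.tr z u
      · rw [if_pos h1, Module.Basis.repr_self, Module.Basis.repr_self, Finsupp.single_apply,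
          Finsupp.single_apply]
        refine if_congr ?_ rfl rfl
        simp [Prod.ext_iff, h1, eq_mul_inv_iff_mul_eq]
      · rw [if_neg h1]
        simp [Module.Basis.repr_self, Finsupp.single_apply, Prod.ext_iff, h1]
    exact LinearMap.congr_fun h v
  · rw [if_neg hu]
    have h : (Finsupp.lapply ((w, u) : G × F)).comp
        (bas.repr.toLinearMap.comp (LinearMap.mulRight ℂ (bas (z, t)))) = 0 := by
      apply Module.Basis.ext bas
      rintro ⟨y', s'⟩
      simp only [LinearMap.comp_apply, LinearMap.mulRight_apply, hmul,
        LinearEquiv.coe_toLinearMap, Finsupp.lapply_apply, LinearMap.zero_apply]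
      split_ifs with h1
      · rw [repr_basis_apply bas hmul,
          if_neg (fun hcon => hu ((congrArg Prod.snd hcon).symm))]
      · simp
    exact LinearMap.congr_fun h v

lemma repr_basis_mul (z : G) (t : F) (w : G) (u : F) (v : K) :
    bas.repr (bas (z, t) * v) (w, u) =
      if t = mp.tr (z⁻¹ * w) u then bas.repr v (z⁻¹ * w, u) else 0 := by
  by_cases ht : t = mp.tr (z⁻¹ * w) u
  · rw [if_pos ht]
    have h : (Finsupp.lapply ((w, u) : G × F)).comp
        (bas.repr.toLinearMap.comp (LinearMap.mulLeft ℂ (bas (z, t)))) =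
        (Finsupp.lapply ((z⁻¹ * w, u) : G × F)).comp bas.repr.toLinearMap := by
      apply Module.Basis.ext bas
      rintro ⟨y', s'⟩
      simp only [LinearMap.comp_apply, LinearMap.mulLeft_apply, hmul,
        LinearEquiv.coe_toLinearMap, Finsupp.lapply_apply]
      by_cases h2 : y' = z⁻¹ * w ∧ s' = u
      · obtain ⟨rfl, rfl⟩ := h2
        rw [if_pos ht, repr_basis_apply bas hmul, repr_basis_apply bas hmul,
          if_pos (by rw [mul_inv_cancel_left]), if_pos rfl]
      · have hval : bas.repr (bas (y', s')) (z⁻¹ * w, u) = 0 := by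
          rw [repr_basis_apply bas hmul,
            if_neg (fun hcon => h2 ⟨(Prod.ext_iff.1 hcon).1, (Prod.ext_iff.1 hcon).2⟩)]
        rw [hval]
        split_ifs with h1
        · rw [repr_basis_apply bas hmul,
            if_neg (fun hcon => h2 ⟨eq_inv_mul_iff_mul_eq.mpr (Prod.ext_iff.1 hcon).1,
              (Prod.ext_iff.1 hcon).2⟩)]
        · simp
    exact LinearMap.congr_fun h v
  · rw [if_neg ht]
    have h : (Finsupp.lapply ((w, u) : G × F)).comp
        (bas.repr.toLinearMap.comp (LinearMap.mulLeft ℂ (bas (z, t)))) = 0 := by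
      apply Module.Basis.ext bas
      rintro ⟨y', s'⟩
      simp only [LinearMap.comp_apply, LinearMap.mulLeft_apply, hmul,
        LinearEquiv.coe_toLinearMap, Finsupp.lapply_apply, LinearMap.zero_apply]
      split_ifs with h1
      · rw [repr_basis_apply bas hmul, if_neg]
        intro hcon
        apply ht
        injection hcon with ha hb
        rw [h1, ← ha, inv_mul_cancel_left, hb]
      · simp
    exact LinearMap.congr_fun h v

variable (hcounit : ∀ (y : G) (s : F),
      Coalgebra.counit (R := ℂ) (bas (y, s)) = if s = 1 then (1 : ℂ) else 0)

include hcounit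

lemma lambda_repr (Λ : K) (hΛ : IsNormalizedIntegral ℂ Λ) (y : G) (s : F) :
    bas.repr Λ (y, s) = if s = 1 then ((Fintype.card G : ℂ))⁻¹ else 0 := by
  have hzero : ∀ (y : G) (s : F), s ≠ 1 → bas.repr Λ (y, s) = 0 := by
    intro y s hs
    have h := congrArg (fun x => bas.repr x (y, s)) (hΛ.1 (bas (1, mp.tr y s)))
    simp only [map_smul, Finsupp.smul_apply, smul_eq_mul] at h
    rw [repr_basis_mul bas hmul, hcounit] at h
    rw [if_pos (by rw [inv_one, one_mul]), inv_one, one_mul,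
      if_neg (by rw [tr_eq_one_iff]; exact hs)] at h
    simpa using h
  have hconst : ∀ y : G, bas.repr Λ (y, 1) = bas.repr Λ (1, 1) := by
    intro y
    have h := congrArg (fun x => bas.repr x (y, 1)) (hΛ.1 (bas (y, 1)))
    simp only [map_smul, Finsupp.smul_apply, smul_eq_mul] at h
    rw [repr_basis_mul bas hmul, hcounit] at h
    rw [if_pos (by rw [inv_mul_cancel, mp.tr_one]), inv_mul_cancel, if_pos rfl, one_mul] at h
    exact h.symm
  have hcard : (Fintype.card G : ℂ) * bas.repr Λ (1, 1) = 1 := by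
    have h := hΛ.2
    conv_lhs at h => rw [← bas.sum_repr Λ]
    rw [map_sum] at h
    simp only [map_smul, smul_eq_mul, hcounit] at h
    rw [Fintype.sum_prod_type] at h
    have hinner : ∀ y : G, (∑ s : F, bas.repr Λ (y, s) * (if s = 1 then (1:ℂ) else 0))
        = bas.repr Λ (1, 1) := by
      intro y
      rw [Finset.sum_eq_single 1]
      · rw [if_pos rfl, mul_one, hconst]
      · intro b _ hb; rw [if_neg hb, mul_zero]
      · intro hmem; exact absurd (Finset.mem_univ 1) hmem
    rw [Finset.sum_congr rfl (fun y _ => hinner y), Finset.sum_const, Finset.card_univ,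
      nsmul_eq_mul] at h
    exact h
  by_cases hs : s = 1
  · subst hs
    rw [if_pos rfl, hconst]
    have hne : (Fintype.card G : ℂ) ≠ 0 := by
      simp [Fintype.card_ne_zero]
    field_simp
    linear_combination hcard
  · rw [if_neg hs]
    exact hzero y s hs

end withbas
end Hopf
section Hopf2
variable {F G : Type*} [Group F] [Group G]
  [Fintype F] [Fintype G] [DecidableEq F] [DecidableEq G]
  {mp : MatchedPair F G}
  {K : Type*} [Ring K] [HopfAlgebra ℂ K]
  (bas : Module.Basis (G × F) ℂ K)
  (hmul : ∀ (y z : G) (s t : F),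
      bas (y, s) * bas (z, t) = if s = mp.tr z t then bas (y * z, t) else 0)
  (hcomul : ∀ (y : G) (s : F),
      Coalgebra.comul (R := ℂ) (bas (y, s)) =
        ∑ b : F, bas (y, b) ⊗ₜ[ℂ] bas (mp.tl y b, b⁻¹ * s))
  (hcounit : ∀ (y : G) (s : F),
      Coalgebra.counit (R := ℂ) (bas (y, s)) = if s = 1 then (1 : ℂ) else 0)

include hcounit in
lemma sweedler_zero (y : G) (s : F) :
    sweedlerPower ℂ K 0 (bas (y, s)) = (if s = 1 then (1 : ℂ) else 0) • 1 := by
  show (Algebra.linearMap ℂ K ∘ₗ Coalgebra.counit) (bas (y, s)) = _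
  rw [LinearMap.comp_apply, hcounit, Algebra.linearMap_apply, Algebra.algebraMap_eq_smul_one]

include hcomul in
lemma sweedler_succ_left (n : ℕ) (y : G) (s : F) :
    sweedlerPower ℂ K (n + 1) (bas (y, s)) =
      ∑ b : F, bas (y, b) * sweedlerPower ℂ K n (bas (mp.tl y b, b⁻¹ * s)) := by
  show (LinearMap.mul' ℂ K ∘ₗ
      TensorProduct.map LinearMap.id (sweedlerPower ℂ K n) ∘ₗ Coalgebra.comul) (bas (y, s)) = _
  rw [LinearMap.comp_apply, LinearMap.comp_apply, hcomul, map_sum, map_sum]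
  refine Finset.sum_congr rfl fun b _ => ?_
  rw [TensorProduct.map_tmul, LinearMap.mul'_apply, LinearMap.id_coe, id_eq]

include hcomul hcounit in
lemma sweedler_succ_right (n : ℕ) (y : G) (s : F) :
    sweedlerPower ℂ K (n + 1) (bas (y, s)) =
      ∑ c : F, sweedlerPower ℂ K n (bas (y, c)) * bas (mp.tl y c, c⁻¹ * s) := by
  induction n generalizing y s with
  | zero =>
      rw [sweedler_succ_left bas hcomul]
      have hL : ∀ b : F, bas (y, b) * sweedlerPower ℂ K 0 (bas (mp.tl y b, b⁻¹ * s)) =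
          if b = s then bas (y, b) else 0 := by
        intro b
        rw [sweedler_zero bas hcounit, mul_smul_comm, mul_one, ite_smul, one_smul, zero_smul]
        exact if_congr inv_mul_eq_one rfl rfl
      have hR : ∀ c : F, sweedlerPower ℂ K 0 (bas (y, c)) * bas (mp.tl y c, c⁻¹ * s) =
          if c = (1 : F) then bas (mp.tl y c, c⁻¹ * s) else 0 := by
        intro c
        rw [sweedler_zero bas hcounit, smul_mul_assoc, one_mul, ite_smul, one_smul, zero_smul]
      rw [Finset.sum_congr rfl fun b _ => hL b, Finset.sum_congr rfl fun c _ => hR c,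
        Finset.sum_ite_eq' Finset.univ s (fun b => bas (y, b)),
        Finset.sum_ite_eq' Finset.univ (1 : F) (fun c => bas (mp.tl y c, c⁻¹ * s))]
      simp [mp.tl_one]
  | succ n ih =>
      rw [sweedler_succ_left bas hcomul]
      have hLHS : ∀ b : F, bas (y, b) * sweedlerPower ℂ K (n + 1) (bas (mp.tl y b, b⁻¹ * s)) =
          ∑ c : F, bas (y, b) * (sweedlerPower ℂ K n (bas (mp.tl y b, c)) *
            bas (mp.tl (mp.tl y b) c, c⁻¹ * (b⁻¹ * s))) := by
        intro b
        rw [ih (mp.tl y b) (b⁻¹ * s), Finset.mul_sum]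
      have hRHS : ∀ c : F, sweedlerPower ℂ K (n + 1) (bas (y, c)) *
          bas (mp.tl y c, c⁻¹ * s) =
          ∑ b : F, bas (y, b) * sweedlerPower ℂ K n (bas (mp.tl y b, b⁻¹ * c)) *
            bas (mp.tl y c, c⁻¹ * s) := by
        intro c
        rw [sweedler_succ_left bas hcomul, Finset.sum_mul]
      rw [Finset.sum_congr rfl fun b _ => hLHS b]
      conv_rhs => rw [Finset.sum_congr rfl fun c _ => hRHS c, Finset.sum_comm]
      refine Finset.sum_congr rfl fun b _ => ?_
      conv_rhs => rw [← Equiv.sum_comp (Equiv.mulLeft b)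
        (fun c => bas (y, b) * sweedlerPower ℂ K n (bas (mp.tl y b, b⁻¹ * c)) *
          bas (mp.tl y c, c⁻¹ * s))]
      refine Finset.sum_congr rfl fun c _ => ?_
      simp only [Equiv.coe_mulLeft, inv_mul_cancel_left, mp.tl_mul, mul_inv_rev, mul_assoc]

include hmul hcomul hcounit in
lemma coeff_lemma (y : G) (u : F) (n j : ℕ) :
    bas.repr (sweedlerPower ℂ K n (bas (y, Sseq mp y u j))) (Wseq mp y u j, Useq mp y u j) =
      if Sseq mp y u (n + j) = 1 ∧ Wseq mp y u (n + j) = 1 then 1 else 0 := by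
  induction n generalizing j with
  | zero =>
      rw [sweedler_zero bas hcounit, map_smul, Finsupp.smul_apply, smul_eq_mul,
        one_eq_sum bas hmul, map_sum, Finsupp.finset_sum_apply]
      have hterm : ∀ t : F,
          (bas.repr (bas ((1 : G), t))) (Wseq mp y u j, Useq mp y u j) =
            if t = Useq mp y u j then (if (1 : G) = Wseq mp y u j then (1 : ℂ) else 0)
            else 0 := by
        intro t
        rw [repr_basis_apply bas hmul]
        by_cases h1 : t = Useq mp y u j <;> by_cases h2 : (1 : G) = Wseq mp y u j <;>
          simp_all [Prod.ext_iff]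
      rw [Finset.sum_congr rfl fun t _ => hterm t,
        Finset.sum_ite_eq' Finset.univ (Useq mp y u j)
          (fun _ => if (1 : G) = Wseq mp y u j then (1 : ℂ) else 0)]
      simp only [Finset.mem_univ, if_true, zero_add]
      by_cases h1 : Sseq mp y u j = 1 <;> by_cases h2 : Wseq mp y u j = 1 <;>
        simp_all [eq_comm]
  | succ n ih =>
      rw [sweedler_succ_right bas hcomul hcounit, map_sum, Finsupp.finset_sum_apply]
      have hcond : ∀ c : F, (Useq mp y u j = c⁻¹ * Sseq mp y u j) ↔ c = Sseq mp y u (j + 1) := by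
        intro c
        constructor
        · intro h
          rw [Sseq_succ']
          exact eq_mul_inv_iff_mul_eq.mpr (eq_inv_mul_iff_mul_eq.mp h)
        · rintro rfl
          exact (Sseq_succ_inv_mul y u j).symm
      have hterm : ∀ c : F,
          (bas.repr (sweedlerPower ℂ K n (bas (y, c)) *
              bas (mp.tl y c, c⁻¹ * Sseq mp y u j))) (Wseq mp y u j, Useq mp y u j) =
            if c = Sseq mp y u (j + 1) then
              (bas.repr (sweedlerPower ℂ K n (bas (y, c))))
                (Wseq mp y u j * (mp.tl y c)⁻¹, mp.tr (mp.tl y c) (c⁻¹ * Sseq mp y u j))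
            else 0 := by
        intro c
        rw [repr_mul_basis bas hmul]
        exact if_congr (hcond c) rfl rfl
      rw [Finset.sum_congr rfl fun c _ => hterm c,
        Finset.sum_ite_eq' Finset.univ (Sseq mp y u (j + 1))
          (fun c => (bas.repr (sweedlerPower ℂ K n (bas (y, c))))
            (Wseq mp y u j * (mp.tl y c)⁻¹, mp.tr (mp.tl y c) (c⁻¹ * Sseq mp y u j)))]
      rw [if_pos (Finset.mem_univ _), Sseq_succ_inv_mul y u j, (exchange_Useq y u j).1,
        show Wseq mp y u j * (mp.tl y (Sseq mp y u (j + 1)))⁻¹ = Wseq mp y u (j + 1) from rfl,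
        ih (j + 1), show n + (j + 1) = n + 1 + j by omega]

end Hopf2
section Final
variable {F G : Type*} [Group F] [Group G]
  [Fintype F] [Fintype G] [DecidableEq F] [DecidableEq G]
  {mp : MatchedPair F G}

open MPG in
lemma conj_count (a : F) (z : G) (n : ℕ) :
    (∑ y : G, if (mkF mp (mp.tr z a)⁻¹ * mkG mp y) ^ n = 1 then (1 : ℂ) else 0) =
      ∑ x : G, if (mkF mp a * mkG mp x) ^ n = 1 then (1 : ℂ) else 0 := by
  rw [← Equiv.sum_comp ((Equiv.inv G).trans ((Equiv.mulLeft ((mp.tl z a)⁻¹)).trans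
      (Equiv.mulRight z))) (fun x => if (mkF mp a * mkG mp x) ^ n = 1 then (1 : ℂ) else 0)]
  refine Finset.sum_congr rfl fun y _ => ?_
  simp only [Equiv.trans_apply, Equiv.inv_apply, Equiv.coe_mulLeft, Equiv.coe_mulRight]
  refine if_congr ?_ rfl rfl
  have hexch := MPG.exchange (mp := mp) z a
  have hfac : mkF mp (mp.tr z a) = mkG mp z * mkF mp a * (mkG mp (mp.tl z a))⁻¹ :=
    eq_mul_inv_iff_mul_eq.mpr hexch.symm
  have key : mkF mp (mp.tr z a)⁻¹ * mkG mp y =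
      mkG mp (mp.tl z a) * (mkF mp a⁻¹ * mkG mp (z⁻¹ * y * mp.tl z a)) *
        (mkG mp (mp.tl z a))⁻¹ := by
    simp only [map_inv, map_mul, hfac]
    group
  rw [key, conj_pow_eq_one_iff]
  have h2 : mkF mp a⁻¹ * mkG mp (z⁻¹ * y * mp.tl z a) =
      (mkG mp ((mp.tl z a)⁻¹ * y⁻¹ * z) * mkF mp a)⁻¹ := by
    simp only [map_inv, map_mul, mul_inv_rev, inv_inv]
    group
  rw [h2, inv_pow, inv_eq_one]
  have h3 : mkG mp ((mp.tl z a)⁻¹ * y⁻¹ * z) * mkF mp a =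
      mkG mp ((mp.tl z a)⁻¹ * y⁻¹ * z) * (mkF mp a * mkG mp ((mp.tl z a)⁻¹ * y⁻¹ * z)) *
        (mkG mp ((mp.tl z a)⁻¹ * y⁻¹ * z))⁻¹ := by
    simp only [mul_assoc, mul_inv_cancel, mul_one]
  rw [h3, conj_pow_eq_one_iff]

lemma sum_pair_collapse (c : G × F → ℂ) (w0 : G) (u0 : F) :
    (∑ p : G × F, c p * (if p.2 = u0 ∧ p.1 = w0 then 1 else 0)) = c (w0, u0) := by
  rw [Fintype.sum_prod_type]
  have h1 : ∀ w : G, (∑ u : F, c (w, u) * (if u = u0 ∧ w = w0 then 1 else 0)) =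
      if w = w0 then c (w, u0) else 0 := by
    intro w
    by_cases hw : w = w0
    · subst hw
      rw [if_pos rfl, Finset.sum_eq_single u0]
      · simp
      · intro b _ hb; simp [hb]
      · simp
    · rw [if_neg hw]
      apply Finset.sum_eq_zero
      intro u _
      simp [hw]
  rw [Finset.sum_congr rfl fun w _ => h1 w,
    Finset.sum_ite_eq' Finset.univ w0 (fun w => c (w, u0))]
  simp

end Final

/-- **(Proposition 5.8.)**  For a matched pair `(F, G, ▷, ◁)` of finite groups, the
`n`-th Frobenius–Schur indicator of the `ℂ^G#ℂF`-module `ℂ^G # p_a` equals the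
number of `x ∈ G` with `(a, x)^n = (1, 1)` in `F ⋈ G`. -/
theorem nu_bismash_module {F G : Type*} [Group F] [Group G]
    [Fintype F] [Fintype G] [DecidableEq F] [DecidableEq G]
    (mp : MatchedPair F G) (a : F)
    -- the bismash product Hopf algebra, presented by its structure constants:
    (K : Type*) [Ring K] [HopfAlgebra ℂ K] [IsSemisimpleRing K]
    (bas : Module.Basis (G × F) ℂ K)
    (hmul : ∀ (y z : G) (s t : F),
      bas (y, s) * bas (z, t) = if s = mp.tr z t then bas (y * z, t) else 0)
    (hcomul : ∀ (y : G) (s : F),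
      Coalgebra.comul (R := ℂ) (bas (y, s)) =
        ∑ b : F, bas (y, b) ⊗ₜ[ℂ] bas (mp.tl y b, b⁻¹ * s))
    (hcounit : ∀ (y : G) (s : F),
      Coalgebra.counit (R := ℂ) (bas (y, s)) = if s = 1 then (1 : ℂ) else 0)
    -- the normalized integral of `K`:
    (Λ : K) (hΛ : IsNormalizedIntegral ℂ Λ)
    -- the module `ℂ^G # p_a`, presented by its action on the standard basis:
    (ρ : K →ₐ[ℂ] Module.End ℂ (G → ℂ))
    (hρ : ∀ (y z : G) (s : F),
      ρ (bas (y, s)) (Pi.single z 1) =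
        if s = mp.tr z a then Pi.single (y * z) (1 : ℂ) else 0)
    (n : ℕ) (hn : 0 < n) :
    nuRep Λ ρ n =
      ((Finset.univ.filter fun x : G => mp.bowtiePow (a, x) n = (1, 1)).card : ℂ) := by
  have hΛr := lambda_repr bas hmul hcounit Λ hΛ
  have hGne : (Fintype.card G : ℂ) ≠ 0 := Nat.cast_ne_zero.mpr Fintype.card_ne_zero
  -- trace of `ρ` on basis elements
  have htrb : ∀ (w : G) (u : F), LinearMap.trace ℂ (G → ℂ) (ρ (bas (w, u))) =
      ∑ z : G, (if u = mp.tr z a ∧ w = 1 then (1 : ℂ) else 0) := by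
    intro w u
    rw [LinearMap.trace_eq_matrix_trace ℂ (Pi.basisFun ℂ G), Matrix.trace]
    refine Finset.sum_congr rfl fun z _ => ?_
    rw [Matrix.diag_apply, LinearMap.toMatrix_apply, Pi.basisFun_apply, hρ]
    by_cases hu : u = mp.tr z a
    · rw [if_pos hu, Pi.basisFun_repr, Pi.single_apply]
      by_cases hw : w = 1
      · subst hw; simp [hu]
      · rw [if_neg (fun hzz => hw (right_eq_mul.mp hzz)),
          if_neg (fun hc => hw hc.2)]
    · rw [if_neg hu, if_neg (fun hc => hu hc.1)]
      simp
  -- the trace of `ρ` applied to Sweedler powers of `bas (y, 1)`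
  have hTy : ∀ y : G, LinearMap.trace ℂ (G → ℂ) (ρ (sweedlerPower ℂ K n (bas (y, 1)))) =
      ∑ z : G, (if (MPG.mkF mp (mp.tr z a)⁻¹ * MPG.mkG mp y) ^ n = 1 then (1 : ℂ) else 0) := by
    intro y
    have hx : ρ (sweedlerPower ℂ K n (bas (y, 1))) = ∑ p : G × F,
        bas.repr (sweedlerPower ℂ K n (bas (y, 1))) p • ρ (bas p) := by
      conv_lhs => rw [← bas.sum_repr (sweedlerPower ℂ K n (bas (y, 1)))]
      rw [map_sum]
      exact Finset.sum_congr rfl fun p _ => by rw [map_smul]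
    rw [hx, map_sum]
    have hterm : ∀ p : G × F, LinearMap.trace ℂ (G → ℂ)
        (bas.repr (sweedlerPower ℂ K n (bas (y, 1))) p • ρ (bas p)) =
        ∑ z : G, bas.repr (sweedlerPower ℂ K n (bas (y, 1))) p *
          (if p.2 = mp.tr z a ∧ p.1 = 1 then (1 : ℂ) else 0) := by
      rintro ⟨w, u⟩
      rw [map_smul, smul_eq_mul, htrb, Finset.mul_sum]
    rw [Finset.sum_congr rfl fun p _ => hterm p, Finset.sum_comm]
    refine Finset.sum_congr rfl fun z _ => ?_
    rw [sum_pair_collapse (bas.repr (sweedlerPower ℂ K n (bas (y, 1)))) 1 (mp.tr z a)]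
    have h := coeff_lemma bas hmul hcomul hcounit y (mp.tr z a) n 0
    rw [Useq_zero] at h
    rw [show Sseq mp y (mp.tr z a) 0 = 1 from rfl, show Wseq mp y (mp.tr z a) 0 = 1 from rfl,
      Nat.add_zero] at h
    rw [h]
    exact if_congr (final_iff y (mp.tr z a) n) rfl rfl
  -- main computation
  simp only [nuRep]
  have hexp : ρ (sweedlerPower ℂ K n Λ) =
      ∑ p : G × F, bas.repr Λ p • ρ (sweedlerPower ℂ K n (bas p)) := by
    conv_lhs => rw [← bas.sum_repr Λ]
    rw [map_sum, map_sum]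
    exact Finset.sum_congr rfl fun p _ => by rw [map_smul, map_smul]
  rw [hexp, map_sum]
  simp only [map_smul, smul_eq_mul]
  rw [Fintype.sum_prod_type]
  have hy : ∀ y : G, (∑ s : F, bas.repr Λ (y, s) *
      LinearMap.trace ℂ (G → ℂ) (ρ (sweedlerPower ℂ K n (bas (y, s))))) =
      (Fintype.card G : ℂ)⁻¹ *
        LinearMap.trace ℂ (G → ℂ) (ρ (sweedlerPower ℂ K n (bas (y, 1)))) := by
    intro y
    rw [Finset.sum_eq_single (1 : F)]
    · rw [hΛr, if_pos rfl]
    · intro s _ hs; rw [hΛr, if_neg hs, zero_mul]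
    · simp
  rw [Finset.sum_congr rfl fun y _ => hy y, ← Finset.mul_sum,
    Finset.sum_congr rfl fun y _ => hTy y, Finset.sum_comm,
    Finset.sum_congr rfl fun z _ => conj_count a z n,
    Finset.sum_const, Finset.card_univ, nsmul_eq_mul, ← mul_assoc,
    inv_mul_cancel₀ hGne, one_mul, Finset.card_filter]
  push_cast
  exact Finset.sum_congr rfl fun x _ =>
    if_congr (MPG.bowtiePow_eq_one_iff a x n).symm rfl rfl

end FSIndicator
end
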